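/- For every natural number n and all x, y ∈ ℂ, the function u ↦ (1 + conj(x)·u)^n · (1 + conj(u)·y)^n · (1 + |u|²)^{−(n+2)} is integrable on ℂ with respect to Lebesgue measure dA, and ((n+1)/π) ∫_ℂ (1 + conj(x)·u)^n (1 + conj(u)·y)^n (1 + |u|²)^{−(n+2)} dA(u) = (1 + conj(x)·y)^n. (This is the reproducing/overcompleteness identity for the Bergman kernel B_n(x,y) = ((n+1)/(2πn))·(1 + conj(x)·y)^n/(1+|x|²)^n of the n-th power of the prequantum line bundle on the 2-sphere, written in the standard affine chart.) -/

import Mathlib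

open MeasureTheory intervalIntegral Set Complex Real Nat

lemma prod_fact (j s : ℕ) : (∏ i ∈ Finset.range s, (j + 1 + i)) * j ! = (j + s)! := by
  induction s with
  | zero => simp
  | succ s ih =>
    rw [Finset.prod_range_succ, mul_right_comm, ih]
    rw [show j + (s+1) = (j + s) + 1 by ring, Nat.factorial_succ]
    ring

lemma beta_nat (j m : ℕ) :
    ∫ x in (0:ℝ)..1, x ^ j * (1 - x) ^ m = (j ! * m ! : ℝ) / ((j + m + 1)! : ℝ) := by
  have h := Complex.betaIntegral_eval_nat_add_one_right
    (u := (j : ℂ) + 1) (by simp; positivity) m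
  rw [Complex.betaIntegral] at h
  simp only [add_sub_cancel_right] at h
  have h2 : (∫ x in (0:ℝ)..1, ((x:ℂ)) ^ ((j:ℕ):ℂ) * ((1:ℂ) - x) ^ ((m:ℕ):ℂ))
      = ((∫ x in (0:ℝ)..1, x ^ j * (1-x) ^ m : ℝ) : ℂ) := by
    rw [← intervalIntegral.integral_ofReal]
    apply intervalIntegral.integral_congr
    intro x _
    simp only [Complex.cpow_natCast]
    push_cast
    ring
  rw [h2] at h
  have h3 : (∏ z ∈ Finset.range (m + 1), ((j:ℂ) + 1 + z)) = ((j + m + 1)! : ℂ) / (j ! : ℂ) := by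
    have h4 := prod_fact j (m+1)
    have h5 := congrArg (fun t : ℕ => (t : ℂ)) h4
    simp only [Nat.cast_mul, Nat.cast_prod, Nat.cast_add, Nat.cast_one] at h5
    have hj : (j ! : ℂ) ≠ 0 := by exact_mod_cast Nat.factorial_ne_zero j
    field_simp
    rw [show j + (m+1) = j + m + 1 by ring] at h5
    exact h5
  rw [h3] at h
  have hj : (j ! : ℂ) ≠ 0 := by exact_mod_cast Nat.factorial_ne_zero j
  have hjm : ((j + m + 1)! : ℂ) ≠ 0 := by exact_mod_cast Nat.factorial_ne_zero _
  have h6 : ((∫ x in (0:ℝ)..1, x ^ j * (1-x) ^ m : ℝ) : ℂ)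
      = (((j ! * m ! : ℝ) / ((j+m+1)! : ℝ) : ℝ) : ℂ) := by
    rw [h]
    push_cast
    field_simp
  exact_mod_cast h6

lemma L2 (n j : ℕ) (hj : j ≤ n) :
    ∫ t in Ioi (0:ℝ), t ^ j * ((1+t) ^ (n+2))⁻¹
      = (j ! : ℝ) * ((n-j)! : ℝ) / ((n+1)! : ℝ) := by
  obtain ⟨d, rfl⟩ : ∃ d, n = j + d := ⟨n - j, (Nat.add_sub_cancel' hj).symm⟩
  have himg : (fun s : ℝ => s / (1 - s)) '' Ioo 0 1 = Ioi 0 := by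
    ext t
    constructor
    · rintro ⟨s, ⟨h0, h1⟩, rfl⟩
      exact div_pos h0 (by linarith)
    · intro ht
      refine ⟨t / (1 + t), ⟨div_pos ht (by linarith [mem_Ioi.1 ht]), ?_⟩, ?_⟩
      · rw [div_lt_one (by linarith [mem_Ioi.1 ht])]; linarith [mem_Ioi.1 ht]
      · have h1t : (1:ℝ) + t ≠ 0 := by have := mem_Ioi.1 ht; positivity
        field_simp
        ring
  have hderiv : ∀ s ∈ Ioo (0:ℝ) 1, HasDerivWithinAt (fun s : ℝ => s / (1 - s))
      (((1 - s) ^ 2)⁻¹) (Ioo 0 1) s := by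
    intro s hs
    have hne : (1:ℝ) - s ≠ 0 := by have := hs.2; intro h; simp only [mem_Ioo] at hs; linarith
    have := (hasDerivAt_id s).div ((hasDerivAt_id s).const_sub 1) hne
    convert this.hasDerivWithinAt using 1
    · rfl
    · rfl
    · rfl
    · simp only [id]; ring
  have hinj : InjOn (fun s : ℝ => s / (1 - s)) (Ioo 0 1) := by
    intro a ha b hb hab
    have ha1 : (1:ℝ) - a ≠ 0 := by simp only [mem_Ioo] at ha; intro h; linarith
    have hb1 : (1:ℝ) - b ≠ 0 := by simp only [mem_Ioo] at hb; intro h; linarith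
    field_simp at hab
    linarith
  rw [← himg, integral_image_eq_integral_abs_deriv_smul measurableSet_Ioo hderiv hinj]
  have : ∀ s ∈ Ioo (0:ℝ) 1,
      |((1 - s) ^ 2)⁻¹| • ((fun s : ℝ => s / (1 - s)) s ^ j
        * ((1 + (fun s : ℝ => s / (1 - s)) s) ^ (j + d + 2))⁻¹)
      = s ^ j * (1 - s) ^ d := by
    intro s hs
    simp only [mem_Ioo] at hs
    have h1 : (0:ℝ) < 1 - s := by linarith
    have h1' : (1:ℝ) - s ≠ 0 := ne_of_gt h1
    have key : (1:ℝ) + s / (1 - s) = (1 - s)⁻¹ := by field_simp; ring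
    rw [smul_eq_mul, abs_of_pos (by positivity), key, div_pow, inv_pow, inv_inv]
    rw [show j + d + 2 = (j + 2) + d by ring, pow_add, show j + 2 = j + 2 by rfl]
    field_simp
    ring
  rw [setIntegral_congr_fun measurableSet_Ioo this]
  rw [← integral_Ioc_eq_integral_Ioo, ← intervalIntegral.integral_of_le (by norm_num : (0:ℝ) ≤ 1)]
  rw [beta_nat j d, Nat.add_sub_cancel_left]

lemma L3 (n j : ℕ) (hj : j ≤ n) :
    ∫ r in Ioi (0:ℝ), r ^ (2*j+1) * ((1+r^2) ^ (n+2))⁻¹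
      = (j ! : ℝ) * ((n-j)! : ℝ) / ((n+1)! : ℝ) / 2 := by
  have himg : (fun r : ℝ => r ^ 2) '' Ioi 0 = Ioi 0 := by
    ext t
    constructor
    · rintro ⟨r, hr, rfl⟩; exact mem_Ioi.2 (pow_pos (mem_Ioi.1 hr) 2)
    · intro ht
      have ht' := mem_Ioi.1 ht
      exact ⟨Real.sqrt t, mem_Ioi.2 (Real.sqrt_pos.2 ht'), Real.sq_sqrt ht'.le⟩
  have hderiv : ∀ r ∈ Ioi (0:ℝ), HasDerivWithinAt (fun r : ℝ => r ^ 2) (2*r) (Ioi 0) r := by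
    intro r _
    simpa using (hasDerivAt_pow 2 r).hasDerivWithinAt
  have hinj : InjOn (fun r : ℝ => r ^ 2) (Ioi 0) := by
    intro a ha b hb hab
    have := mem_Ioi.1 ha; have := mem_Ioi.1 hb
    simp only [mem_Ioi] at *
    nlinarith [sq_nonneg (a-b), sq_nonneg (a+b)]
  have key := L2 n j hj
  rw [← himg, integral_image_eq_integral_abs_deriv_smul measurableSet_Ioi hderiv hinj] at key
  have congr1 : ∀ r ∈ Ioi (0:ℝ),
      |2*r| • ((fun r : ℝ => r ^ 2) r ^ j * ((1 + (fun r : ℝ => r ^ 2) r) ^ (n+2))⁻¹)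
        = 2 * (r ^ (2*j+1) * ((1+r^2) ^ (n+2))⁻¹) := by
    intro r hr
    have hr' := mem_Ioi.1 hr
    rw [smul_eq_mul, abs_of_pos (by positivity), ← pow_mul]
    ring
  rw [setIntegral_congr_fun measurableSet_Ioi congr1, MeasureTheory.integral_const_mul] at key
  linarith

lemma L4 (m : ℤ) :
    ∫ θ in Ioo (-π) π, Complex.exp (m * θ * Complex.I)
      = if m = 0 then (2*π : ℂ) else 0 := by
  rw [← integral_Ioc_eq_integral_Ioo,
    ← intervalIntegral.integral_of_le (by linarith [Real.pi_pos] : -π ≤ π)]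
  rcases eq_or_ne m 0 with rfl | hm
  · simp
    norm_num
    ring
  · rw [if_neg hm]
    have : ∀ θ : ℝ, Complex.exp (m * θ * Complex.I) = Complex.exp ((m * Complex.I) * θ) := by
      intro θ; ring_nf
    simp_rw [this]
    rw [integral_exp_mul_complex (by simp [hm, Complex.I_ne_zero])]
    have h1 : (m : ℂ) * Complex.I * π = m * (π * Complex.I) := by ring
    have h2 : (m : ℂ) * Complex.I * (-π : ℝ) = m * (-(π * Complex.I)) := by push_cast; ring
    rw [h1, h2, Complex.exp_int_mul, Complex.exp_int_mul, Complex.exp_pi_mul_I,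
      Complex.exp_neg, Complex.exp_pi_mul_I]
    norm_num

lemma L5 (n j k : ℕ) (hj : j ≤ n) (hk : k ≤ n) :
    ∫ u : ℂ, u ^ j * ((starRingEnd ℂ) u) ^ k * ((1 + (‖u‖:ℂ)^2) ^ (n+2))⁻¹
      = if j = k then ((π : ℂ) * (j ! : ℕ) * ((n-j)! : ℕ) / ((n+1)! : ℕ)) else 0 := by
  rw [← Complex.integral_comp_polarCoord_symm]
  have hcongr : ∀ p ∈ polarCoord.target,
      p.1 • ((Complex.polarCoord.symm p) ^ j
        * ((starRingEnd ℂ) (Complex.polarCoord.symm p)) ^ k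
        * ((1 + (‖Complex.polarCoord.symm p‖:ℂ)^2) ^ (n+2))⁻¹)
      = (fun r : ℝ => ((r ^ (j+k+1) * ((1+r^2) ^ (n+2))⁻¹ : ℝ) : ℂ)) p.1
        * (fun θ : ℝ => Complex.exp ((((j:ℤ) - k : ℤ) : ℂ) * θ * Complex.I)) p.2 := by
    rintro ⟨r, θ⟩ ⟨hr, hθ⟩
    have hr' : (0:ℝ) < r := hr
    have hsymm : Complex.polarCoord.symm (r, θ) = (r : ℂ) * Complex.exp (θ * Complex.I) := by
      rw [Complex.polarCoord_symm_apply, Complex.exp_mul_I]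
      push_cast
      ring
    have hnorm : ‖Complex.polarCoord.symm (r, θ)‖ = r := by
      rw [Complex.norm_polarCoord_symm, abs_of_pos hr']
    have hconj : (starRingEnd ℂ) ((r:ℂ) * Complex.exp (θ * Complex.I))
        = (r:ℂ) * Complex.exp (-(θ:ℂ) * Complex.I) := by
      rw [map_mul, Complex.conj_ofReal, ← Complex.exp_conj]
      congr 1
      simp [Complex.conj_I]
    have hexp : Complex.exp ((θ:ℂ) * Complex.I) ^ j * Complex.exp (-(θ:ℂ) * Complex.I) ^ k
        = Complex.exp ((((j:ℤ) - k : ℤ) : ℂ) * θ * Complex.I) := by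
      rw [← Complex.exp_nat_mul, ← Complex.exp_nat_mul, ← Complex.exp_add]
      congr 1
      push_cast
      ring
    have hnorm' : ‖(r:ℂ) * Complex.exp ((θ:ℂ) * Complex.I)‖ = r := by rw [← hsymm]; exact hnorm
    simp only [hsymm, hnorm', hconj]
    rw [mul_pow, mul_pow, Complex.real_smul]
    push_cast at hexp ⊢
    rw [← hexp]
    ring
  rw [setIntegral_congr_fun (polarCoord.open_target.measurableSet) hcongr]
  rw [show polarCoord.target = Set.Ioi (0:ℝ) ×ˢ Set.Ioo (-π) π from rfl, Measure.volume_eq_prod]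
  rw [MeasureTheory.setIntegral_prod_mul (μ := (volume : Measure ℝ)) (ν := (volume : Measure ℝ))
    (fun r : ℝ => ((r ^ (j+k+1) * ((1+r^2) ^ (n+2))⁻¹ : ℝ) : ℂ))
    (fun θ : ℝ => Complex.exp ((((j:ℤ) - k : ℤ) : ℂ) * θ * Complex.I)) (Ioi 0) (Ioo (-π) π)]
  have hofr : (∫ x in Ioi (0:ℝ), ((x ^ (j+k+1) * ((1+x^2) ^ (n+2))⁻¹ : ℝ) : ℂ))
      = ((∫ x in Ioi (0:ℝ), x ^ (j+k+1) * ((1+x^2) ^ (n+2))⁻¹ : ℝ) : ℂ) := integral_ofReal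
  rw [hofr, L4]
  rcases eq_or_ne j k with rfl | hjk
  · rw [if_pos rfl, if_pos (by simp)]
    rw [show j + j + 1 = 2*j+1 by ring, L3 n j hj]
    push_cast
    field_simp
  · have hm : ((j:ℤ) - (k:ℤ)) ≠ 0 := sub_ne_zero.2 (by exact_mod_cast hjk)
    rw [if_neg hm, if_neg hjk, mul_zero]

lemma int_aux (n : ℕ) (c : ℝ) (hc : 0 ≤ c) (g : ℂ → ℂ) (hg : Continuous g)
    (hb : ∀ u : ℂ, ‖g u‖ ≤ c * (1+‖u‖^2)^n) :
    Integrable (fun u : ℂ => g u * ((1 + (‖u‖:ℂ)^2) ^ (n+2))⁻¹) (volume : Measure ℂ) := by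
  have hA : ∀ u : ℂ, (0:ℝ) < 1 + ‖u‖^2 := fun u => by positivity
  apply Integrable.mono' (g := fun u : ℂ => c * ((1+‖u‖^2) ^ (-(4:ℝ)/2)))
  · exact (integrable_rpow_neg_one_add_norm_sq
      (by rw [Complex.finrank_real_complex]; norm_num)).const_mul c
  · apply Continuous.aestronglyMeasurable
    apply hg.mul
    apply Continuous.inv₀
    · fun_prop
    · intro u
      apply pow_ne_zero
      rw [show (1 + (‖u‖:ℂ)^2) = ((1+‖u‖^2 : ℝ) : ℂ) by push_cast; ring]
      exact_mod_cast (hA u).ne'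
  · filter_upwards with u
    have hw : ‖((1 + (‖u‖:ℂ)^2) ^ (n+2))⁻¹‖ = ((1+‖u‖^2) ^ (n+2))⁻¹ := by
      rw [show (1 + (‖u‖:ℂ)^2) = ((1+‖u‖^2 : ℝ) : ℂ) by push_cast; ring]
      rw [norm_inv, norm_pow, Complex.norm_real, Real.norm_of_nonneg (hA u).le]
    rw [norm_mul, hw]
    have h2 : (1+‖u‖^2 : ℝ) ^ (-(4:ℝ)/2) = ((1+‖u‖^2)^(2:ℕ))⁻¹ := by
      rw [show -(4:ℝ)/2 = -((2:ℕ):ℝ) by norm_num, Real.rpow_neg (hA u).le, Real.rpow_natCast]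
    rw [h2]
    calc ‖g u‖ * ((1+‖u‖^2) ^ (n+2))⁻¹
        ≤ (c * (1+‖u‖^2)^n) * ((1+‖u‖^2) ^ (n+2))⁻¹ :=
          mul_le_mul_of_nonneg_right (hb u) (by positivity)
      _ = c * ((1+‖u‖^2)^(2:ℕ))⁻¹ := by
          rw [pow_add, mul_inv]
          have := (pow_pos (hA u) n).ne'
          field_simp

/-- The reproducing/overcompleteness identity for the Bergman kernel
of the `n`-th power of the prequantum line bundle on the 2-sphere, in the standard
affine chart: for all `n : ℕ` and `x y : ℂ`, the function
`u ↦ (1 + conj x·u)ⁿ (1 + conj u·y)ⁿ (1 + |u|²)^{−(n+2)}` is Lebesgue-integrable on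
`ℂ` and `((n+1)/π) ∫ (1 + conj x·u)ⁿ (1 + conj u·y)ⁿ (1 + |u|²)^{−(n+2)} dA(u)
  = (1 + conj x·y)ⁿ`. -/
theorem sphere_bergman_reproducing (n : ℕ) (x y : ℂ) :
    Integrable (fun u : ℂ =>
      (1 + (starRingEnd ℂ) x * u) ^ n * (1 + (starRingEnd ℂ) u * y) ^ n *
        ((1 + (‖u‖ : ℂ) ^ 2) ^ (n + 2))⁻¹) (volume : Measure ℂ) ∧
    ((n : ℂ) + 1) / (Real.pi : ℂ) *
      ∫ u : ℂ, (1 + (starRingEnd ℂ) x * u) ^ n * (1 + (starRingEnd ℂ) u * y) ^ n *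
        ((1 + (‖u‖ : ℂ) ^ 2) ^ (n + 2))⁻¹ ∂(volume : Measure ℂ) =
      (1 + (starRingEnd ℂ) x * y) ^ n := by
  have h2ab : ∀ a : ℝ, (1+a)^2 ≤ 2*(1+a^2) := fun a => by nlinarith [sq_nonneg (1-a)]
  -- integrability of the monomial pieces
  have hintJK : ∀ j k : ℕ, j ≤ n → k ≤ n →
      Integrable (fun u : ℂ => u ^ j * ((starRingEnd ℂ) u) ^ k
        * ((1 + (‖u‖:ℂ)^2) ^ (n+2))⁻¹) (volume : Measure ℂ) := by
    intro j k hj hk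
    apply int_aux n (2^n) (by positivity) _
      ((continuous_pow j).mul (Complex.continuous_conj.pow k))
    intro u
    have h1 : (1:ℝ) ≤ 1 + ‖u‖ := by linarith [norm_nonneg u]
    calc ‖u ^ j * ((starRingEnd ℂ) u) ^ k‖ = ‖u‖ ^ (j + k) := by
          rw [norm_mul, norm_pow, norm_pow, RCLike.norm_conj, pow_add]
      _ ≤ (1 + ‖u‖) ^ (j + k) := by
          apply pow_le_pow_left₀ (norm_nonneg u)
          linarith [norm_nonneg u]
      _ ≤ (1 + ‖u‖) ^ (2*n) := pow_le_pow_right₀ h1 (by omega)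
      _ = ((1 + ‖u‖)^2) ^ n := by rw [← pow_mul]
      _ ≤ (2*(1 + ‖u‖^2)) ^ n := pow_le_pow_left₀ (by positivity) (h2ab ‖u‖) n
      _ = 2^n * (1 + ‖u‖^2)^n := mul_pow 2 _ n
  -- integrability of the full integrand
  have hintF : Integrable (fun u : ℂ =>
      (1 + (starRingEnd ℂ) x * u) ^ n * (1 + (starRingEnd ℂ) u * y) ^ n *
        ((1 + (‖u‖ : ℂ) ^ 2) ^ (n + 2))⁻¹) (volume : Measure ℂ) := by
    apply int_aux n (((1+‖x‖)*(1+‖y‖)*2)^n) (by positivity)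
      (fun u => (1 + (starRingEnd ℂ) x * u) ^ n * (1 + (starRingEnd ℂ) u * y) ^ n)
      (((continuous_const.add (continuous_const.mul continuous_id)).pow n).mul
        ((continuous_const.add (Complex.continuous_conj.mul continuous_const)).pow n))
    intro u
    have hxa : ‖(1:ℂ) + (starRingEnd ℂ) x * u‖ ≤ (1+‖x‖)*(1+‖u‖) := by
      calc ‖(1:ℂ) + (starRingEnd ℂ) x * u‖ ≤ ‖(1:ℂ)‖ + ‖(starRingEnd ℂ) x * u‖ := norm_add_le _ _
        _ = 1 + ‖x‖ * ‖u‖ := by rw [norm_one, norm_mul, RCLike.norm_conj]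
        _ ≤ (1+‖x‖)*(1+‖u‖) := by nlinarith [norm_nonneg x, norm_nonneg u]
    have hya : ‖(1:ℂ) + (starRingEnd ℂ) u * y‖ ≤ (1+‖y‖)*(1+‖u‖) := by
      calc ‖(1:ℂ) + (starRingEnd ℂ) u * y‖ ≤ ‖(1:ℂ)‖ + ‖(starRingEnd ℂ) u * y‖ := norm_add_le _ _
        _ = 1 + ‖u‖ * ‖y‖ := by rw [norm_one, norm_mul, RCLike.norm_conj]
        _ ≤ (1+‖y‖)*(1+‖u‖) := by nlinarith [norm_nonneg y, norm_nonneg u]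
    calc ‖(1 + (starRingEnd ℂ) x * u) ^ n * (1 + (starRingEnd ℂ) u * y) ^ n‖
        = ‖(1:ℂ) + (starRingEnd ℂ) x * u‖ ^ n * ‖(1:ℂ) + (starRingEnd ℂ) u * y‖ ^ n := by
          rw [norm_mul, norm_pow, norm_pow]
      _ ≤ ((1+‖x‖)*(1+‖u‖)) ^ n * ((1+‖y‖)*(1+‖u‖)) ^ n :=
          mul_le_mul (pow_le_pow_left₀ (norm_nonneg _) hxa n)
            (pow_le_pow_left₀ (norm_nonneg _) hya n) (by positivity) (by positivity)
      _ = ((1+‖x‖)*(1+‖y‖) * (1+‖u‖)^2) ^ n := by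
          rw [← mul_pow]
          congr 1
          ring
      _ ≤ ((1+‖x‖)*(1+‖y‖) * (2*(1+‖u‖^2))) ^ n := by
          apply pow_le_pow_left₀ (by positivity)
          have := h2ab ‖u‖
          exact mul_le_mul_of_nonneg_left this (by positivity)
      _ = ((1+‖x‖)*(1+‖y‖)*2)^n * (1+‖u‖^2)^n := by
          rw [show (1+‖x‖)*(1+‖y‖)*(2*(1+‖u‖^2)) = ((1+‖x‖)*(1+‖y‖)*2)*(1+‖u‖^2) by ring,
            mul_pow]
  refine ⟨hintF, ?_⟩
  -- expand the integrand into monomials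
  have expand : (fun u : ℂ =>
      (1 + (starRingEnd ℂ) x * u) ^ n * (1 + (starRingEnd ℂ) u * y) ^ n *
        ((1 + (‖u‖ : ℂ) ^ 2) ^ (n + 2))⁻¹)
      = fun u : ℂ => ∑ j ∈ Finset.range (n+1), ∑ k ∈ Finset.range (n+1),
          ((n.choose j : ℂ) * (n.choose k : ℂ) * (((starRingEnd ℂ) x)^j * y^k)) *
            (u ^ j * ((starRingEnd ℂ) u) ^ k * ((1 + (‖u‖:ℂ)^2) ^ (n+2))⁻¹) := by
    funext u
    rw [add_comm (1:ℂ) ((starRingEnd ℂ) x * u), add_comm (1:ℂ) ((starRingEnd ℂ) u * y),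
      add_pow, add_pow, Finset.sum_mul_sum, Finset.sum_mul]
    refine Finset.sum_congr rfl fun j hj => ?_
    rw [Finset.sum_mul]
    refine Finset.sum_congr rfl fun k hk => ?_
    rw [mul_pow, mul_pow]
    ring
  have hI : (∫ u : ℂ, (1 + (starRingEnd ℂ) x * u) ^ n * (1 + (starRingEnd ℂ) u * y) ^ n *
        ((1 + (‖u‖ : ℂ) ^ 2) ^ (n + 2))⁻¹ ∂(volume : Measure ℂ))
      = ∑ j ∈ Finset.range (n+1), ((n.choose j : ℂ))^2 * (((starRingEnd ℂ) x * y)^j) *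
          ((Real.pi : ℂ) * (j ! : ℕ) * ((n-j)! : ℕ) / ((n+1)! : ℕ)) := by
    rw [expand]
    rw [integral_finset_sum _ (fun j hj => integrable_finset_sum _ (fun k hk =>
      ((hintJK j k (Nat.lt_succ_iff.1 (Finset.mem_range.1 hj))
        (Nat.lt_succ_iff.1 (Finset.mem_range.1 hk))).const_mul _)))]
    refine Finset.sum_congr rfl fun j hj => ?_
    have hj' : j ≤ n := Nat.lt_succ_iff.1 (Finset.mem_range.1 hj)
    rw [integral_finset_sum _ (fun k hk =>
      ((hintJK j k hj' (Nat.lt_succ_iff.1 (Finset.mem_range.1 hk))).const_mul _))]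
    have step : ∀ k ∈ Finset.range (n+1),
        (∫ u : ℂ, ((n.choose j : ℂ) * (n.choose k : ℂ) * (((starRingEnd ℂ) x)^j * y^k)) *
            (u ^ j * ((starRingEnd ℂ) u) ^ k * ((1 + (‖u‖:ℂ)^2) ^ (n+2))⁻¹) ∂(volume : Measure ℂ))
        = if j = k then ((n.choose j : ℂ) * (n.choose k : ℂ) * (((starRingEnd ℂ) x)^j * y^k)) *
            ((Real.pi : ℂ) * (j ! : ℕ) * ((n-j)! : ℕ) / ((n+1)! : ℕ)) else 0 := by
      intro k hk
      rw [MeasureTheory.integral_const_mul _ _,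
        L5 n j k hj' (Nat.lt_succ_iff.1 (Finset.mem_range.1 hk)), mul_ite, mul_zero]
    rw [Finset.sum_congr rfl step, Finset.sum_ite_eq (Finset.range (n+1)) j, if_pos hj]
    rw [mul_pow]
    ring
  rw [hI, Finset.mul_sum, add_comm (1:ℂ) ((starRingEnd ℂ) x * y), add_pow]
  refine Finset.sum_congr rfl fun j hj => ?_
  have hj' : j ≤ n := Nat.lt_succ_iff.1 (Finset.mem_range.1 hj)
  have hfact : (n.choose j : ℂ) * (j ! : ℕ) * ((n-j)! : ℕ) = ((n)! : ℕ) := by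
    exact_mod_cast congrArg (Nat.cast : ℕ → ℂ) (Nat.choose_mul_factorial_mul_factorial hj')
  have hfact2 : (((n+1)! : ℕ) : ℂ) = ((n:ℂ)+1) * ((n)! : ℕ) := by
    rw [Nat.factorial_succ]; push_cast; ring
  have hπ : (Real.pi : ℂ) ≠ 0 := by
    exact_mod_cast Complex.ofReal_ne_zero.2 Real.pi_ne_zero
  have hne1 : (((n+1)! : ℕ) : ℂ) ≠ 0 := by exact_mod_cast Nat.factorial_ne_zero (n+1)
  have hnen : (((n)! : ℕ) : ℂ) ≠ 0 := by exact_mod_cast Nat.factorial_ne_zero n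
  rw [one_pow, mul_one]
  have hn1 : ((n:ℂ)+1) ≠ 0 := Nat.cast_add_one_ne_zero n
  rw [hfact2]
  field_simp
  linear_combination (((starRingEnd ℂ) x * y)^j * (n.choose j : ℂ)) * hfact
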